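/- arXiv:1612.06628 — 3 statements merged into one kernel-verified Lean document; each statement's English description precedes it below -/
import Mathlib

section
/- Let B be a ring and M an Armendariz right B-module with B ⊆ M. Then M is a p.p.-module over B if and only if the polynomial module M[x] is a p.p.-module over B[x]. -/
open Polynomial MulOpposite

/-- The polynomial module `M[x]` over `Bᵐᵒᵖ[X]`, for a right `B`-module `M`
(encoded as a left `Bᵐᵒᵖ`-module). -/
noncomputable def polyModAux (B : Type*) [Ring B] (M : Type*) [AddCommGroup M]
    [Module Bᵐᵒᵖ M] : Module (Polynomial Bᵐᵒᵖ) (ℕ →₀ M) :=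
  Module.compHom _
    (Polynomial.eval₂RingHom' (Module.toAddMonoidEnd Bᵐᵒᵖ (ℕ →₀ M))
      (Finsupp.mapDomain.addMonoidHom Nat.succ : AddMonoid.End (ℕ →₀ M))
      (fun a => AddMonoidHom.ext fun p => (Finsupp.mapDomain_smul a p).symm))

/-- `M[x]` as a right `B[x]`-module, i.e. a left module over `(B[x])ᵐᵒᵖ`. -/
noncomputable def polyModOp (B : Type*) [Ring B] (M : Type*) [AddCommGroup M]
    [Module Bᵐᵒᵖ M] : Module (Polynomial B)ᵐᵒᵖ (ℕ →₀ M) :=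
  letI := polyModAux B M
  Module.compHom _ (Polynomial.opRingEquiv B).toRingHom

/-- The right action `m(x) · f(x)` of `B[x]` on the polynomial module `M[x]`. -/
noncomputable def rsmul (B : Type*) [Ring B] (M : Type*) [AddCommGroup M]
    [Module Bᵐᵒᵖ M] (p : ℕ →₀ M) (f : Polynomial B) : ℕ →₀ M := by
  letI := polyModOp B M
  exact op f • p

/-- The annihilator in `S` of a subset `X` of a right `S`-module `N`:
`ann_S(X) = {r : S | Xr = 0}`. -/
def rAnn (S : Type*) [Ring S] {N : Type*} [AddCommGroup N] [Module Sᵐᵒᵖ N]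
    (X : Set N) : Set S :=
  {r : S | ∀ x ∈ X, op r • x = 0}

/-- `C` is the right ideal `eS` generated by an idempotent `e` of `S`. -/
def IsIdempotentGenerated (S : Type*) [Ring S] (C : Set S) : Prop :=
  ∃ e : S, e * e = e ∧ C = {x : S | ∃ b : S, x = e * b}

/-- A right `B`-module `M` is Armendariz if `m(x) f(x) = 0` implies `m_i b_j = 0` for all
coefficients `m_i` of `m(x)` and `b_j` of `f(x)`. -/
def RArmendariz (B : Type*) [Ring B] (M : Type*) [AddCommGroup M] [Module Bᵐᵒᵖ M] : Prop :=
  ∀ (p : ℕ →₀ M) (f : Polynomial B), rsmul B M p f = 0 →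
    ∀ i j : ℕ, op (f.coeff j) • p i = 0

/-- A right `S`-module `N` is a p.p.-module if the annihilator of each element is
generated by an idempotent. -/
def IsPPMod (S : Type*) [Ring S] (N : Type*) [AddCommGroup N] [Module Sᵐᵒᵖ N] : Prop :=
  ∀ n : N, IsIdempotentGenerated S (rAnn S {n})

/-- A right `S`-module `N` is a p.q.-Baer module if the annihilator of each cyclic
submodule `nS` is generated by an idempotent. -/
def IsPQBaerMod (S : Type*) [Ring S] (N : Type*) [AddCommGroup N] [Module Sᵐᵒᵖ N] : Prop :=
  ∀ n : N, IsIdempotentGenerated S (rAnn S {x : N | ∃ b : S, x = op b • n})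

/-! ### Auxiliary lemmas -/

section Aux

lemma mapDomain_succ_iter {M : Type*} [AddCommMonoid M] (j : ℕ) (p : ℕ →₀ M) :
    (Finsupp.mapDomain.addMonoidHom Nat.succ : AddMonoid.End (ℕ →₀ M))^[j] p
      = Finsupp.mapDomain (· + j) p := by
  induction j with
  | zero => exact (Finsupp.mapDomain_id).symm
  | succ n ih =>
    rw [Function.iterate_succ_apply', ih]
    show Finsupp.mapDomain Nat.succ _ = _
    rw [← Finsupp.mapDomain_comp]
    congr 1

variable {B : Type*} [Ring B] {M : Type*} [AddCommGroup M] [Module Bᵐᵒᵖ M]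

lemma rsmul_eq (p : ℕ →₀ M) (f : Polynomial B) :
    rsmul B M p f = Polynomial.eval₂ (Module.toAddMonoidEnd Bᵐᵒᵖ (ℕ →₀ M))
      (Finsupp.mapDomain.addMonoidHom Nat.succ : AddMonoid.End (ℕ →₀ M))
      (Polynomial.opRingEquiv B (op f)) p := rfl

lemma rsmul_add_right (p : ℕ →₀ M) (f g : Polynomial B) :
    rsmul B M p (f + g) = rsmul B M p f + rsmul B M p g := by
  simp only [rsmul_eq, op_add, map_add]
  erw [eval₂_add]
  rfl

lemma rsmul_monomial (p : ℕ →₀ M) (j : ℕ) (b : B) :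
    rsmul B M p (monomial j b) = op b • Finsupp.mapDomain (· + j) p := by
  rw [rsmul_eq, opRingEquiv_op_monomial]
  erw [eval₂_monomial]
  show op b • ((Finsupp.mapDomain.addMonoidHom Nat.succ : AddMonoid.End (ℕ →₀ M))^[j] p) = _
  rw [mapDomain_succ_iter]

lemma rsmul_apply (p : ℕ →₀ M) (f : Polynomial B) (n : ℕ) :
    rsmul B M p f n = ∑ j ∈ Finset.range (n+1), op (f.coeff j) • p (n - j) := by
  induction f using Polynomial.induction_on' with
  | add f g hf hg =>
    rw [rsmul_add_right]
    simp only [Finsupp.add_apply, hf, hg, coeff_add, op_add, add_smul, Finset.sum_add_distrib]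
  | monomial j b =>
    rw [rsmul_monomial]
    have key : (Finsupp.mapDomain (· + j) p) n = if j ≤ n then p (n - j) else 0 := by
      split_ifs with h
      · conv_lhs => rw [show n = (n - j) + j by omega]
        rw [Finsupp.mapDomain_apply (add_left_injective j)]
      · rw [Finsupp.mapDomain_notin_range]
        rintro ⟨a, rfl⟩
        exact h (Nat.le_add_left j a)
    have key2 : ∀ i ∈ Finset.range (n+1),
        op ((monomial j b : Polynomial B).coeff i) • p (n - i)
          = if j = i then op b • p (n - i) else 0 := by
      intro i _; rw [coeff_monomial]; split_ifs <;> simp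
    rw [Finsupp.smul_apply, key, Finset.sum_congr rfl key2, Finset.sum_ite_eq]
    by_cases h : j ≤ n <;>
      simp [Finset.mem_range, Nat.lt_succ_iff, h]

lemma rsmul_eq_zero_of (p : ℕ →₀ M) (f : Polynomial B)
    (h : ∀ i j, op (f.coeff j) • p i = 0) : rsmul B M p f = 0 := by
  ext n
  rw [rsmul_apply]
  simp [h]

lemma coeff_mul' (n : ℕ) (g f : Polynomial B) :
    (g*f).coeff n = ∑ j ∈ Finset.range (n+1), g.coeff (n-j) * f.coeff j := by
  rw [coeff_mul, ← Finset.HasAntidiagonal.map_prodComm_antidiagonal, Finset.sum_map,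
    Finset.Nat.sum_antidiagonal_eq_sum_range_succ_mk]
  rfl

/-- `B` embeds in `M`, hence `B` is an Armendariz ring. -/
lemma ring_armendariz (ι : B →ₗ[Bᵐᵒᵖ] M) (hι : Function.Injective ι)
    (hArm : RArmendariz B M) (g f : Polynomial B) (hgf : g * f = 0) :
    ∀ i j, g.coeff i * f.coeff j = 0 := by
  set p : ℕ →₀ M := Finsupp.mapRange ι (map_zero ι) g.toFinsupp.coeff with hp
  have hpi : ∀ i, p i = ι (g.coeff i) := fun i => rfl
  have smul_eq : ∀ (a b : B), op b • ι a = ι (a * b) := by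
    intro a b
    rw [← op_smul_eq_mul, map_smul]
  have key : rsmul B M p f = 0 := by
    ext n
    rw [rsmul_apply]
    have : ∀ j ∈ Finset.range (n+1),
        op (f.coeff j) • p (n - j) = ι (g.coeff (n-j) * f.coeff j) := by
      intro j _
      rw [hpi, smul_eq]
    rw [Finset.sum_congr rfl this, ← map_sum, ← coeff_mul', hgf]
    simp
  intro i j
  have h := hArm p f key i j
  rw [hpi, smul_eq] at h
  exact hι (by simpa using h)

lemma expand_quad (u v w : B) :
    (C u + C v * X) * (C w - C v * X)
      = C (u*w) + (C (v*w) - C (u*v)) * X - C (v*v) * (X*X) := by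
  have hx : (X : Polynomial B) * (C v * X) = C v * (X*X) := by
    rw [← mul_assoc, X_mul_C, mul_assoc]
  simp only [map_mul]
  noncomm_ring [X_mul_C, hx]

/-- In an Armendariz ring all idempotents are central. -/
lemma idem_central
    (harm : ∀ g f : Polynomial B, g * f = 0 → ∀ i j, g.coeff i * f.coeff j = 0)
    (e : B) (he : e * e = e) (r : B) : e * r = r * e := by
  have h1 : e * r = e * r * e := by
    set a := e*r - e*r*e with ha
    have hae : a * e = 0 := by
      rw [ha, sub_mul, mul_assoc (e*r) e e, he, sub_self]
    have hea : e * a = a := by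
      rw [ha, mul_sub, ← mul_assoc, ← mul_assoc, he, ← mul_assoc e e r, he]
    have hfg : (C e + C a * X) * (C (1-e) - C a * X) = 0 := by
      rw [expand_quad]
      have h2 : e * (1-e) = 0 := by rw [mul_sub, mul_one, he, sub_self]
      have h3 : a * (1-e) = a := by rw [mul_sub, mul_one, hae, sub_zero]
      have h4 : a * a = 0 := by
        calc a * a = a * (e * a) := by rw [hea]
          _ = (a * e) * a := by rw [← mul_assoc]
          _ = 0 := by rw [hae, zero_mul]
      rw [h2, h3, h4, hea]
      simp
    have h5 := harm _ _ hfg 0 1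
    have c1 : (C e + C a * X).coeff 0 = e := by simp
    have c2 : (C (1-e) - C a * X).coeff 1 = -a := by simp [coeff_one]
    rw [c1, c2, mul_neg, neg_eq_zero] at h5
    have h6 : a = 0 := by rw [← hea, h5]
    rw [ha] at h6
    exact eq_of_sub_eq_zero h6
  have h2 : r * e = e * r * e := by
    set b := r*e - e*r*e with hb
    have heb : e * b = 0 := by
      rw [hb, mul_sub, ← mul_assoc e r e, ← mul_assoc e (e*r) e, ← mul_assoc e e r, he, sub_self]
    have hbe : b * e = b := by
      rw [hb, sub_mul, mul_assoc r e e, he, mul_assoc (e*r) e e, he]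
    have hfg : (C (1-e) + C b * X) * (C e - C b * X) = 0 := by
      rw [expand_quad]
      have h3 : (1-e) * e = 0 := by rw [sub_mul, one_mul, he, sub_self]
      have h4 : (1-e) * b = b := by rw [sub_mul, one_mul, heb, sub_zero]
      have h5 : b * b = 0 := by
        calc b * b = (b * e) * b := by rw [hbe]
          _ = b * (e * b) := by rw [mul_assoc]
          _ = 0 := by rw [heb, mul_zero]
      rw [h3, h4, h5, hbe]
      simp
    have h6 := harm _ _ hfg 0 1
    have c1 : (C (1-e) + C b * X).coeff 0 = 1 - e := by simp [coeff_one]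
    have c2 : (C e - C b * X).coeff 1 = -b := by simp
    rw [c1, c2, mul_neg, neg_eq_zero, sub_mul, one_mul, heb, sub_zero] at h6
    rw [hb] at h6
    exact eq_of_sub_eq_zero h6
  rw [h1, h2]

lemma listprod_central_idem (l : List B)
    (h : ∀ x ∈ l, x * x = x ∧ ∀ r : B, x * r = r * x) :
    (∀ r : B, l.prod * r = r * l.prod) ∧ l.prod * l.prod = l.prod := by
  induction l with
  | nil => simp
  | cons a t ih =>
    obtain ⟨ha, hc⟩ := h a (by simp)
    obtain ⟨ihc, ihi⟩ := ih (fun x hx => h x (by simp [hx]))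
    have cent : ∀ r : B, (a :: t).prod * r = r * (a :: t).prod := by
      intro r
      rw [List.prod_cons, mul_assoc, ihc r, ← mul_assoc, hc r, mul_assoc]
    refine ⟨cent, ?_⟩
    rw [List.prod_cons]
    calc a * t.prod * (a * t.prod) = a * (t.prod * (a * t.prod)) := by rw [mul_assoc]
      _ = a * ((t.prod * a) * t.prod) := by rw [← mul_assoc t.prod a t.prod]
      _ = a * ((a * t.prod) * t.prod) := by rw [ihc a]
      _ = a * (a * (t.prod * t.prod)) := by rw [mul_assoc a t.prod t.prod]
      _ = a * (a * t.prod) := by rw [ihi]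
      _ = (a * a) * t.prod := by rw [← mul_assoc]
      _ = a * t.prod := by rw [ha]

lemma listprod_factor (l : List B) (hcomm : ∀ x ∈ l, ∀ r : B, x * r = r * x)
    (x : B) (hx : x ∈ l) : ∃ c : B, l.prod = x * c := by
  induction l with
  | nil => simp at hx
  | cons a t ih =>
    rcases List.mem_cons.mp hx with rfl | hx'
    · exact ⟨t.prod, by rw [List.prod_cons]⟩
    · obtain ⟨c, hc⟩ := ih (fun y hy => hcomm y (by simp [hy])) hx'
      refine ⟨a * c, ?_⟩
      rw [List.prod_cons, hc, ← mul_assoc, hcomm a (by simp) x, mul_assoc]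

lemma listprod_fix (l : List B) (y : B) (h : ∀ x ∈ l, x * y = y) :
    l.prod * y = y := by
  induction l with
  | nil => simp
  | cons a t ih =>
    rw [List.prod_cons, mul_assoc, ih (fun x hx => h x (by simp [hx])), h a (by simp)]

end Aux

/-- If `M` is an Armendariz right `B`-module with `B ⊆ M`, then `M` is a p.p.-module over
`B` if and only if `M[x]` is a p.p.-module over `B[x]`. -/
theorem stmt14 {B : Type*} [Ring B] {M : Type*} [AddCommGroup M] [Module Bᵐᵒᵖ M]
    (ι : B →ₗ[Bᵐᵒᵖ] M) (hι : Function.Injective ι)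
    (hArm : RArmendariz B M) :
    letI := polyModOp B M
    (IsPPMod B M ↔ IsPPMod (Polynomial B) (ℕ →₀ M)) := by
  letI := polyModOp B M
  have hsm : ∀ (p : ℕ →₀ M) (f : Polynomial B), op f • p = rsmul B M p f := fun _ _ => rfl
  have harm := ring_armendariz ι hι hArm
  have hcentral := idem_central harm
  constructor
  · -- M p.p. → M[x] p.p.
    intro hPP p
    -- choose idempotent generators for the annihilators of the coefficients
    choose e he hann using fun i : ℕ => hPP (p i)
    set l : List B := p.support.toList.map e with hl
    have hle : ∀ x ∈ l, x * x = x ∧ ∀ r : B, x * r = r * x := by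
      intro x hx
      obtain ⟨i, _, rfl⟩ := List.mem_map.mp hx
      exact ⟨he i, hcentral (e i) (he i)⟩
    obtain ⟨Ecent, Eidem⟩ := listprod_central_idem l hle
    set E := l.prod with hE
    refine ⟨C E, by rw [← map_mul, Eidem], ?_⟩
    ext f
    constructor
    · -- f annihilates p ⇒ f ∈ (C E) B[x]
      intro hf
      have hf0 : rsmul B M p f = 0 := by
        have := hf p rfl
        rwa [hsm] at this
      have hco := hArm p f hf0
      -- every coefficient of f is fixed by left multiplication by E
      have hfix : ∀ j, E * f.coeff j = f.coeff j := by
        intro j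
        apply listprod_fix
        intro x hx
        obtain ⟨i, hi, rfl⟩ := List.mem_map.mp hx
        have hmem : f.coeff j ∈ rAnn B {p i} := by
          intro m hm
          rcases hm with rfl
          exact hco i j
        rw [hann i] at hmem
        obtain ⟨b, hb⟩ := hmem
        rw [hb, ← mul_assoc, he i]
      refine ⟨f, ?_⟩
      ext n
      rw [coeff_C_mul, hfix n]
    · -- f ∈ (C E) B[x] ⇒ f annihilates p
      rintro ⟨g, rfl⟩ q hq
      rw [show q = p from hq, hsm]
      apply rsmul_eq_zero_of
      intro i j
      rw [coeff_C_mul]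
      by_cases hi : i ∈ p.support
      · -- E factors through e i
        have hmem : e i ∈ l := List.mem_map.mpr ⟨i, Finset.mem_toList.mpr hi, rfl⟩
        obtain ⟨c, hc⟩ := listprod_factor l (fun x hx => (hle x hx).2) (e i) hmem
        have hEc : E * g.coeff j = e i * (c * g.coeff j) := by
          rw [hE, hc, mul_assoc]
        rw [hEc]
        have hmem2 : e i * (c * g.coeff j) ∈ rAnn B {p i} := by
          rw [hann i]; exact ⟨c * g.coeff j, rfl⟩
        exact hmem2 (p i) rfl
      · have : p i = 0 := Finsupp.notMem_support_iff.mp hi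
        rw [this, smul_zero]
  · -- M[x] p.p. → M p.p.
    intro hPP m
    obtain ⟨E, hE, hann⟩ := hPP (Finsupp.single 0 m)
    refine ⟨E.coeff 0, ?_, ?_⟩
    · have := congrArg (fun q => q.coeff 0) hE
      simpa [mul_coeff_zero] using this
    ext b
    constructor
    · intro hb
      have hCb : (C b : Polynomial B) ∈ rAnn (Polynomial B) {Finsupp.single 0 m} := by
        intro q hq
        rw [show q = Finsupp.single 0 m from hq, hsm]
        apply rsmul_eq_zero_of
        intro i j
        rw [coeff_C]
        by_cases hj : j = 0
        · subst hj
          simp only [if_pos rfl]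
          by_cases hi : i = 0
          · subst hi
            simpa [Finsupp.single_eq_same] using hb m rfl
          · rw [Finsupp.single_eq_of_ne' (Ne.symm hi), smul_zero]
        · rw [if_neg hj, op_zero, zero_smul]
      rw [hann] at hCb
      obtain ⟨g, hg⟩ := hCb
      refine ⟨g.coeff 0, ?_⟩
      have := congrArg (fun q => q.coeff 0) hg
      simpa [mul_coeff_zero] using this
    · rintro ⟨c, rfl⟩
      intro x hx
      rw [show x = m from hx]
      have hEann : E ∈ rAnn (Polynomial B) {Finsupp.single 0 m} := by
        rw [hann]; exact ⟨1, (mul_one E).symm⟩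
      have hE0 : rsmul B M (Finsupp.single 0 m) E = 0 := by
        have := hEann (Finsupp.single 0 m) rfl
        rwa [hsm] at this
      have h0 : op (E.coeff 0) • m = 0 := by
        have := hArm _ _ hE0 0 0
        simpa [Finsupp.single_eq_same] using this
      rw [op_mul, mul_smul, h0, smul_zero]
end

section
/- Let M be a reduced right B-module and m an element of the polynomial module M[x]. If m h = 0 for some nonzero polynomial h in B[x], then there exists a nonzero element c in B such that m c = 0. -/
open Polynomial MulOpposite

/-- A right `S`-module `N` is reduced if `na = 0` implies `nS ∩ Na = 0`. -/
def RModReduced (S : Type*) [Ring S] (N : Type*) [AddCommGroup N] [Module Sᵐᵒᵖ N] : Prop :=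
  ∀ (n : N) (a : S), op a • n = 0 →
    ∀ x : N, (∃ b : S, x = op b • n) → (∃ n' : N, x = op a • n') → x = 0

section Aux
variable {B : Type*} [Ring B] {M : Type*} [AddCommGroup M] [Module Bᵐᵒᵖ M]

noncomputable def shiftE (M : Type*) [AddCommGroup M] : AddMonoid.End (ℕ →₀ M) :=
  Finsupp.mapDomain.addMonoidHom Nat.succ

lemma shift_pow (j : ℕ) (p : ℕ →₀ M) :
    ((shiftE M) ^ j) p = Finsupp.mapDomain (· + j) p := by
  induction j with
  | zero =>
    show p = Finsupp.mapDomain (· + 0) p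
    have : ((· + 0) : ℕ → ℕ) = id := by funext n; simp
    rw [this, Finsupp.mapDomain_id]
  | succ j ih =>
    rw [pow_succ']
    show shiftE M (((shiftE M) ^ j) p) = _
    rw [ih]
    show Finsupp.mapDomain Nat.succ _ = _
    rw [← Finsupp.mapDomain_comp]
    congr 1

lemma rsmul_apply_add (p : ℕ →₀ M) (f : Polynomial B) (i : ℕ) :
    rsmul B M p f (i + f.natDegree) =
      ∑ j ∈ Finset.range (f.natDegree + 1), op (f.coeff j) • p (i + f.natDegree - j) := by
  have e : rsmul B M p f = Polynomial.eval₂ (Module.toAddMonoidEnd Bᵐᵒᵖ (ℕ →₀ M))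
      (shiftE M)
      ((Polynomial.opRingEquiv B) (op f)) p := rfl
  have hdeg : ((Polynomial.opRingEquiv B) (op f)).natDegree < f.natDegree + 1 := by
    rw [Polynomial.natDegree_opRingEquiv]; simp
  have hsum : ∀ (s : Finset ℕ) (g : ℕ → AddMonoid.End (ℕ →₀ M)) (q : ℕ →₀ M),
      (∑ x ∈ s, g x) q = ∑ x ∈ s, g x q := fun s g q => AddMonoidHom.finset_sum_apply g s q
  rw [e, Polynomial.eval₂_eq_sum_range' _ hdeg,
    hsum, Finsupp.finset_sum_apply]
  apply Finset.sum_congr rfl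
  intro j hj
  rw [Finset.mem_range] at hj
  have hj' : j ≤ f.natDegree := Nat.lt_succ_iff.mp hj
  have hmul : ∀ (g h : AddMonoid.End (ℕ →₀ M)) (q : ℕ →₀ M), (g * h) q = g (h q) := fun _ _ _ => rfl
  rw [hmul]
  rw [shift_pow, Polynomial.coeff_opRingEquiv, unop_op]
  show (op (f.coeff j) • (Finsupp.mapDomain (· + j) p)) (i + f.natDegree) = _
  rw [Finsupp.smul_apply]
  have hma := Finsupp.mapDomain_apply (add_left_injective j) p (i + f.natDegree - j)
  rw [show i + f.natDegree = (i + f.natDegree - j) + j from by omega, hma, Nat.add_sub_cancel]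

lemma rsmul_C (p : ℕ →₀ M) (c : B) : rsmul B M p (Polynomial.C c) = op c • p := by
  have e : rsmul B M p (Polynomial.C c) = Polynomial.eval₂
      (Module.toAddMonoidEnd Bᵐᵒᵖ (ℕ →₀ M))
      (shiftE M)
      ((Polynomial.opRingEquiv B) (op (Polynomial.C c))) p := rfl
  have hC : (Polynomial.opRingEquiv B) (op (Polynomial.C c)) = Polynomial.C (op c) := by
    ext n
    rw [Polynomial.coeff_opRingEquiv, unop_op]
    simp [Polynomial.coeff_C, apply_ite op]
  rw [e, hC, Polynomial.eval₂_C]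
  rfl

end Aux

/-- If `M` is a reduced right `B`-module and `m ∈ M[x]` satisfies `m h = 0` for some
nonzero `h ∈ B[x]`, then `m c = 0` for some nonzero `c ∈ B`. -/
theorem stmt16 {B : Type*} [Ring B] {M : Type*} [AddCommGroup M] [Module Bᵐᵒᵖ M]
    (hred : RModReduced B M) (p : ℕ →₀ M) (h : Polynomial B) (hh : h ≠ 0)
    (hph : rsmul B M p h = 0) :
    ∃ c : B, c ≠ 0 ∧ rsmul B M p (Polynomial.C c) = 0 := by
  -- reduced consequences
  have L1 : ∀ (m : M) (a b : B), op a • m = 0 → op a • (op b • m) = 0 := by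
    intro m a b hma
    refine hred m a hma _ ⟨b * a, ?_⟩ ⟨op b • m, rfl⟩
    rw [op_mul, mul_smul]
  have L2 : ∀ (m : M) (a : B), op a • (op a • m) = 0 → op a • m = 0 := by
    intro m a hmaa
    exact hred (op a • m) a hmaa _ ⟨1, by simp⟩ ⟨m, rfl⟩
  set t := h.natDegree with ht
  set c := h.coeff t with hc
  have hcne : c ≠ 0 := by
    show h.leadingCoeff ≠ 0
    exact Polynomial.leadingCoeff_ne_zero.mpr hh
  refine ⟨c, hcne, ?_⟩
  set N := p.support.sup id with hN
  have hvanish : ∀ i, N < i → p i = 0 := by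
    intro i hi
    by_contra hne
    have : i ∈ p.support := Finsupp.mem_support_iff.mpr hne
    have := Finset.le_sup (f := id) this
    simp only [id] at this
    omega
  have key : ∀ d i, N < i + d → op c • p i = 0 := by
    intro d
    induction d with
    | zero => intro i hi; rw [hvanish i (by omega), smul_zero]
    | succ d ih =>
      intro i hi
      have eq0 : (rsmul B M p h) (i + t) = 0 := by rw [hph]; rfl
      rw [rsmul_apply_add, ← ht] at eq0
      have eq1 : op c • ∑ j ∈ Finset.range (t + 1), op (h.coeff j) • p (i + t - j) = 0 := by
        rw [eq0, smul_zero]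
      rw [Finset.smul_sum] at eq1
      have eq2 : ∑ j ∈ Finset.range (t + 1), op c • op (h.coeff j) • p (i + t - j)
          = op c • op c • p i := by
        refine Finset.sum_eq_single_of_mem t (Finset.mem_range.mpr (by omega)) ?_ |>.trans ?_
        · intro j hjr hjne
          have hjlt : j < t := lt_of_le_of_ne (Nat.lt_succ_iff.mp (Finset.mem_range.mp hjr)) hjne
          have h1 : op c • p (i + t - j) = 0 := ih _ (by omega)
          exact L1 _ _ _ h1
        · rw [← hc, Nat.add_sub_cancel]
      rw [eq2] at eq1
      exact L2 _ _ eq1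
  rw [rsmul_C]
  ext n
  rw [Finsupp.smul_apply, Finsupp.zero_apply]
  exact key (N + 1) n (by omega)
end

section
/- Let B be a ring and M a right B-module. Then M is a p.q.-Baer module over B if and only if the polynomial module M[x] is a p.q.-Baer module over B[x]. -/
open Polynomial MulOpposite

section Aux
variable {B : Type*} [Ring B] {M : Type*} [AddCommGroup M] [Module Bᵐᵒᵖ M]

/-- the shift endomorphism -/
noncomputable def shE (M : Type*) [AddCommGroup M] : AddMonoid.End (ℕ →₀ M) :=
  Finsupp.mapDomain.addMonoidHom Nat.succ

lemma shift_pow_apply (k : ℕ) (p : ℕ →₀ M) (n : ℕ) :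
    ((shE M ^ k) p) n = if k ≤ n then p (n - k) else 0 := by
  induction k generalizing n with
  | zero => simp
  | succ k ih =>
    rw [pow_succ']
    have h1 : ((shE M * shE M ^ k) p) = Finsupp.mapDomain Nat.succ ((shE M ^ k) p) := rfl
    rw [h1]
    cases n with
    | zero =>
      rw [Finsupp.mapDomain_notin_range]
      · simp
      · rintro ⟨a, ha⟩; exact Nat.succ_ne_zero a ha
    | succ m =>
      have h2 := Finsupp.mapDomain_apply (f := Nat.succ) Nat.succ_injective ((shE M ^ k) p) m
      rw [h2, ih]
      simp [Nat.succ_le_succ_iff, Nat.succ_sub_succ]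

lemma eval2_apply_coeff (q : Polynomial Bᵐᵒᵖ) (p : ℕ →₀ M) (n : ℕ) :
    (Polynomial.eval₂ (Module.toAddMonoidEnd Bᵐᵒᵖ (ℕ →₀ M)) (shE M) q) p n
      = ∑ j ∈ Finset.range (n+1), q.coeff j • p (n - j) := by
  rw [Polynomial.eval₂_eq_sum, Polynomial.sum]
  have happ : ((∑ k ∈ q.support,
      (Module.toAddMonoidEnd Bᵐᵒᵖ (ℕ →₀ M)) (q.coeff k) * shE M ^ k) p) n
      = ∑ k ∈ q.support,
        (((Module.toAddMonoidEnd Bᵐᵒᵖ (ℕ →₀ M)) (q.coeff k) * shE M ^ k) p) n := by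
    rw [← Finsupp.finset_sum_apply]
    congr 1
    exact AddMonoidHom.finset_sum_apply _ _ _
  rw [happ]
  have hterm : ∀ k, (((Module.toAddMonoidEnd Bᵐᵒᵖ (ℕ →₀ M)) (q.coeff k) * shE M ^ k) p) n
      = if k ≤ n then q.coeff k • p (n - k) else 0 := by
    intro k
    have h3 : (((Module.toAddMonoidEnd Bᵐᵒᵖ (ℕ →₀ M)) (q.coeff k) * shE M ^ k) p) n
        = q.coeff k • (((shE M ^ k) p) n) := rfl
    rw [h3, shift_pow_apply]
    split <;> simp
  simp only [hterm]
  rw [Finset.sum_subset (Finset.subset_union_left (s₁ := q.support) (s₂ := Finset.range (n+1)))]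
  · rw [show ∑ j ∈ Finset.range (n+1), q.coeff j • p (n-j)
        = ∑ j ∈ Finset.range (n+1), if j ≤ n then q.coeff j • p (n - j) else 0 from
      Finset.sum_congr rfl (fun j hj => by
        rw [if_pos (Nat.lt_succ_iff.mp (Finset.mem_range.mp hj))])]
    rw [Finset.sum_subset
      (Finset.subset_union_right (s₁ := q.support) (s₂ := Finset.range (n+1)))]
    intro x _ hx
    rw [if_neg]
    exact fun h => hx (Finset.mem_range.mpr (Nat.lt_succ_of_le h))
  · intro x _ hx
    rw [Polynomial.notMem_support_iff.mp hx]
    split <;> simp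

lemma rsmul_coeff (p : ℕ →₀ M) (f : Polynomial B) (n : ℕ) :
    (rsmul B M p f) n = ∑ j ∈ Finset.range (n+1), op (f.coeff j) • p (n - j) := by
  have h0 : rsmul B M p f = Polynomial.eval₂ (Module.toAddMonoidEnd Bᵐᵒᵖ (ℕ →₀ M))
      (shE M) (Polynomial.opRingEquiv B (op f)) p := rfl
  rw [h0, eval2_apply_coeff]
  refine Finset.sum_congr rfl (fun j _ => ?_)
  rw [Polynomial.coeff_opRingEquiv, unop_op]

lemma rsmul_mul (p : ℕ →₀ M) (f g : Polynomial B) :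
    rsmul B M p (f * g) = rsmul B M (rsmul B M p f) g := by
  letI := polyModOp B M
  show op (f * g) • p = op g • (op f • p)
  rw [op_mul, mul_smul]

/-- membership in the right annihilator of the cyclic right submodule `mB` -/
def annP (m : M) (r : B) : Prop := ∀ b : B, op (b * r) • m = 0

lemma annP_right_mul {m : M} {r : B} (h : annP m r) (c : B) : annP m (r * c) := by
  intro b
  rw [← mul_assoc, op_mul, mul_smul, h b, smul_zero]

/-- For a p.q.-Baer module, packaged choice of idempotents. -/
lemma exists_idem_pq (hM : IsPQBaerMod B M) (m : M) :
    ∃ e : B, e * e = e ∧ (∀ x : B, annP m x ↔ e * x = x) ∧ (∀ a : B, e * (a * e) = a * e) := by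
  obtain ⟨e, he, hset⟩ := hM m
  have hmem : ∀ r : B, annP m r ↔ r ∈ rAnn B {x : M | ∃ b : B, x = op b • m} := by
    intro r
    constructor
    · rintro h x ⟨b, rfl⟩
      rw [← mul_smul, ← op_mul]
      exact h b
    · intro h b
      rw [op_mul, mul_smul]
      exact h (op b • m) ⟨b, rfl⟩
  have hiff : ∀ x : B, annP m x ↔ e * x = x := by
    intro x
    rw [hmem, hset]
    constructor
    · rintro ⟨b, rfl⟩; rw [← mul_assoc, he]
    · intro h; exact ⟨x, h.symm⟩
  refine ⟨e, he, hiff, fun a => ?_⟩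
  rw [← hiff]
  intro b
  have he' : annP m e := (hiff e).mpr he
  rw [← mul_assoc]
  exact he' (b * a)

end Aux
section Tp
variable {B : Type*} [Ring B]

/-- `tp e j i = e i * e (i+1) * ⋯ * e (i+j-1)` -/
def tp (e : ℕ → B) : ℕ → ℕ → B
  | 0, _ => 1
  | (j+1), i => e i * tp e j (i+1)

variable {e : ℕ → B} (He : ∀ i, e i * e i = e i) (Hsc : ∀ i a, e i * (a * e i) = a * e i)

include He Hsc in
lemma tp_fix : ∀ j i k, i ≤ k → k < i + j → e k * tp e j i = tp e j i := by
  intro j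
  induction j with
  | zero => intro i k h1 h2; omega
  | succ j ih =>
    intro i k h1 h2
    rcases Nat.eq_or_lt_of_le h1 with rfl | hlt
    · show e i * (e i * tp e j (i+1)) = _
      rw [← mul_assoc, He]
      rfl
    · have ht : e k * tp e j (i+1) = tp e j (i+1) := ih (i+1) k hlt (by omega)
      show e k * (e i * tp e j (i+1)) = e i * tp e j (i+1)
      conv_lhs => rw [← ht, ← mul_assoc, ← mul_assoc]
      conv_rhs => rw [← ht, ← mul_assoc]
      rw [mul_assoc (e k), Hsc]

lemma tp_smul_fix : ∀ j i (x : B), (∀ k, i ≤ k → k < i + j → e k * x = x) →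
    tp e j i * x = x := by
  intro j
  induction j with
  | zero => intro i x _; show 1 * x = x; rw [one_mul]
  | succ j ih =>
    intro i x hx
    show (e i * tp e j (i+1)) * x = x
    rw [mul_assoc, ih (i+1) x (fun k h1 h2 => hx k (by omega) (by omega)),
      hx i (le_refl i) (by omega)]

end Tp
section QA
variable {B : Type*} [Ring B] {M : Type*} [AddCommGroup M] [Module Bᵐᵒᵖ M]

lemma quasi_armendariz {p : ℕ →₀ M} {e : ℕ → B}
    (He : ∀ i, e i * e i = e i)
    (Hiff : ∀ i x, annP (p i) x ↔ e i * x = x)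
    (Hsc : ∀ i a, e i * (a * e i) = a * e i)
    {N : ℕ} (hN : ∀ i, N < i → p i = 0) {f : Polynomial B}
    (hf : ∀ (b : B) (n : ℕ), ∑ j ∈ Finset.range (n+1), op (b * f.coeff j) • p (n-j) = 0) :
    ∀ j i b, op (b * f.coeff j) • p i = 0 := by
  have main : ∀ j, (∀ j', j < j' → ∀ i b, op (b * f.coeff j') • p i = 0) →
      ∀ i b, op (b * f.coeff j) • p i = 0 := by
    intro j IH
    have inner : ∀ d i, N < i + d → ∀ b, op (b * f.coeff j) • p i = 0 := by
      intro d
      induction d with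
      | zero =>
        intro i hi b
        rw [hN i (by omega), smul_zero]
      | succ d ihd =>
        intro i hi b
        by_cases hiN : N < i
        · rw [hN i hiN, smul_zero]
        · push_neg at hiN
          set t := tp e (N - i) (i+1) with ht
          have key := hf (b * t) (i + j)
          have hterm0 : ∀ j' ∈ Finset.range (i+j+1), j' ≠ j →
              op (b * t * f.coeff j') • p (i + j - j') = 0 := by
            intro j' hj' hne
            rcases lt_or_gt_of_ne hne with hlt | hgt
            · set k := i + j - j' with hk
              by_cases hkN : N < k
              · rw [hN k hkN, smul_zero]
              · push_neg at hkN
                have hik : i < k := by omega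
                have htk : annP (p k) t := by
                  rw [Hiff]
                  exact tp_fix He Hsc (N - i) (i+1) k (by omega) (by omega)
                rw [mul_assoc]
                exact annP_right_mul htk (f.coeff j') b
            · exact IH j' hgt (i+j-j') (b * t)
          have hsum := Finset.sum_eq_single_of_mem j
            (Finset.mem_range.mpr (by omega)) hterm0
          have hkey2 : op (b * t * f.coeff j) • p (i + j - j) = 0 := by
            rw [← hsum]; exact key
          have hts : t * f.coeff j = f.coeff j := by
            apply tp_smul_fix
            intro k h1 h2
            rw [← Hiff]
            intro c
            exact ihd k (by omega) c
          rw [mul_assoc, hts, Nat.add_sub_cancel] at hkey2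
          exact hkey2
    intro i b
    exact inner (N+1) i (by omega) b
  have wrap : ∀ d j, f.natDegree < j + d → ∀ i b, op (b * f.coeff j) • p i = 0 := by
    intro d
    induction d with
    | zero =>
      intro j hj i b
      rw [Polynomial.coeff_eq_zero_of_natDegree_lt (by omega), mul_zero, op_zero, zero_smul]
    | succ d ihd =>
      intro j hj
      by_cases h : f.natDegree < j + d
      · exact ihd j h
      · exact main j (fun j' hj' => ihd j' (by omega))
  intro j
  exact wrap (f.natDegree + 1) j (by omega)

end QA
section Fwd
variable {B : Type*} [Ring B] {M : Type*} [AddCommGroup M] [Module Bᵐᵒᵖ M]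

lemma fwd (hM : IsPQBaerMod B M) :
    letI := polyModOp B M
    IsPQBaerMod (Polynomial B) (ℕ →₀ M) := by
  letI := polyModOp B M
  intro p
  have hch : ∀ i : ℕ, ∃ eb : B, eb*eb = eb ∧ (∀ x, annP (p i) x ↔ eb * x = x) ∧
      (∀ a, eb*(a*eb) = a*eb) := fun i => exists_idem_pq hM (p i)
  choose e He Hiff Hsc using hch
  set N := p.support.sup id with hNdef
  have hN : ∀ i, N < i → p i = 0 := by
    intro i hi
    by_contra h
    have h1 : i ∈ p.support := Finsupp.mem_support_iff.mpr h
    have h2 : i ≤ N := Finset.le_sup (f := id) h1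
    omega
  set g := tp e (N+1) 0 with hg
  have hgfix : ∀ k, k ≤ N → e k * g = g := fun k hk =>
    tp_fix He Hsc (N+1) 0 k (by omega) (by omega)
  have hgann : ∀ k, annP (p k) g := by
    intro k
    by_cases hk : k ≤ N
    · rw [Hiff]; exact hgfix k hk
    · intro b; rw [hN k (by omega), smul_zero]
  have hgg : g * g = g := tp_smul_fix (N+1) 0 g (fun k h1 h2 => hgfix k (by omega))
  refine ⟨C g, by rw [← C_mul, hgg], ?_⟩
  have hmem : ∀ r : Polynomial B,
      r ∈ rAnn (Polynomial B) {x : ℕ →₀ M | ∃ b : Polynomial B, x = op b • p} ↔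
      ∀ q : Polynomial B, rsmul B M p (q * r) = 0 := by
    intro r
    constructor
    · rintro h q
      have h1 := h (op q • p) ⟨q, rfl⟩
      rw [rsmul_mul]
      exact h1
    · rintro h x ⟨q, rfl⟩
      have h1 := h q
      rw [rsmul_mul] at h1
      exact h1
  ext r
  rw [hmem]
  constructor
  · intro h
    have hf : ∀ (b : B) (n : ℕ),
        ∑ j ∈ Finset.range (n+1), op (b * r.coeff j) • p (n-j) = 0 := by
      intro b n
      have h3 : (rsmul B M p (C b * r)) n = 0 := by rw [h (C b)]; rfl
      rw [rsmul_coeff] at h3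
      rw [← h3]
      refine Finset.sum_congr rfl fun j _ => ?_
      rw [Polynomial.coeff_C_mul]
    have hQA := quasi_armendariz He Hiff Hsc hN hf
    have hcoeff : ∀ j, g * r.coeff j = r.coeff j := by
      intro j
      apply tp_smul_fix
      intro k h1 h2
      rw [← Hiff]
      intro c
      exact hQA j k c
    exact ⟨r, by ext n; rw [Polynomial.coeff_C_mul, hcoeff]⟩
  · rintro ⟨h', rfl⟩ q
    ext n
    rw [← mul_assoc, rsmul_coeff, Finsupp.coe_zero, Pi.zero_apply]
    refine Finset.sum_eq_zero fun j _ => ?_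
    rw [Polynomial.coeff_mul (q * C g) h']
    have hop : op (∑ x ∈ Finset.HasAntidiagonal.antidiagonal j, (q * C g).coeff x.1 * h'.coeff x.2)
        = ∑ x ∈ Finset.HasAntidiagonal.antidiagonal j, op ((q * C g).coeff x.1 * h'.coeff x.2) :=
      map_sum (opAddEquiv : B ≃+ Bᵐᵒᵖ) _ _
    rw [hop, Finset.sum_smul]
    refine Finset.sum_eq_zero fun x _ => ?_
    rw [Polynomial.coeff_mul_C, mul_assoc]
    exact annP_right_mul (hgann (n-j)) (h'.coeff x.2) (q.coeff x.1)

end Fwd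
section Bwd
variable {B : Type*} [Ring B] {M : Type*} [AddCommGroup M] [Module Bᵐᵒᵖ M]

lemma rAnn_poly_mem (p : ℕ →₀ M) (r : Polynomial B) :
    letI := polyModOp B M
    (r ∈ rAnn (Polynomial B) {x : ℕ →₀ M | ∃ b : Polynomial B, x = op b • p} ↔
      ∀ q : Polynomial B, rsmul B M p (q * r) = 0) := by
  letI := polyModOp B M
  constructor
  · rintro h q
    have h1 := h (op q • p) ⟨q, rfl⟩
    rw [rsmul_mul]
    exact h1
  · rintro h x ⟨q, rfl⟩
    have h1 := h q
    rw [rsmul_mul] at h1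
    exact h1

lemma annP_iff_mem (m : M) (r : B) :
    r ∈ rAnn B {x : M | ∃ b : B, x = op b • m} ↔ annP m r := by
  constructor
  · intro h b
    rw [op_mul, mul_smul]
    exact h (op b • m) ⟨b, rfl⟩
  · rintro h x ⟨b, rfl⟩
    rw [← mul_smul, ← op_mul]
    exact h b

lemma bwd (hP : letI := polyModOp B M; IsPQBaerMod (Polynomial B) (ℕ →₀ M)) :
    IsPQBaerMod B M := by
  intro m
  letI := polyModOp B M
  set p : ℕ →₀ M := Finsupp.single 0 m with hp
  obtain ⟨E, hEE, hset⟩ := hP p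
  set eb := E.coeff 0 with heb
  have hidem : eb * eb = eb := by
    rw [heb, ← Polynomial.mul_coeff_zero, hEE]
  have hE : ∀ q : Polynomial B, rsmul B M p (q * E) = 0 := by
    rw [← rAnn_poly_mem, hset]
    exact ⟨1, (mul_one E).symm⟩
  have hbe : annP m eb := by
    intro b
    have h1 : (rsmul B M p (C b * E)) 0 = 0 := by rw [hE (C b)]; rfl
    rw [rsmul_coeff] at h1
    norm_num [Finset.sum_range_one, Polynomial.coeff_C_mul, hp] at h1
    exact h1
  refine ⟨eb, hidem, ?_⟩
  ext r
  rw [annP_iff_mem]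
  constructor
  · intro h
    have hCr : C r ∈ rAnn (Polynomial B)
        {x : ℕ →₀ M | ∃ b : Polynomial B, x = op b • p} := by
      rw [rAnn_poly_mem]
      intro q
      ext n
      rw [rsmul_coeff, Finsupp.coe_zero, Pi.zero_apply]
      rw [Finset.sum_eq_single_of_mem n (Finset.mem_range.mpr (by omega))]
      · rw [Nat.sub_self, Polynomial.coeff_mul_C, hp, Finsupp.single_eq_same]
        exact h (q.coeff n)
      · intro j hj hne
        rw [hp, Finsupp.single_eq_of_ne, smul_zero]
        have : j < n := by
          rcases Nat.lt_or_ge j n with h1 | h1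
          · exact h1
          · exact absurd (Nat.le_antisymm (Nat.lt_succ_iff.mp (Finset.mem_range.mp hj)) h1) hne
        omega
    rw [hset] at hCr
    obtain ⟨h', hh⟩ := hCr
    refine ⟨h'.coeff 0, ?_⟩
    have := congrArg (fun v => Polynomial.coeff v 0) hh
    simpa [Polynomial.mul_coeff_zero] using this
  · rintro ⟨c, rfl⟩
    exact annP_right_mul hbe c

end Bwd
/-- `M` is a p.q.-Baer right `B`-module if and only if `M[x]` is a p.q.-Baer right
`B[x]`-module. -/
theorem stmt19 {B : Type*} [Ring B] {M : Type*} [AddCommGroup M] [Module Bᵐᵒᵖ M] :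
    letI := polyModOp B M
    (IsPQBaerMod B M ↔ IsPQBaerMod (Polynomial B) (ℕ →₀ M)) := by
  letI := polyModOp B M
  exact ⟨fun h => fwd h, fun h => bwd h⟩
end
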